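/- Let x ≥ 10 and c := 1 + 1/log x. Then the sum over positive integers n with n ≤ (2/3)x or n ≥ (4/3)x of (log n)/(n^c · |log(x/n)|) is O(log² x), with an absolute implied constant. -/

import Mathlib

open Real

/-- Bound on the zeta-type sum from mathlib's zeta asymptotics. -/
lemma zeta_tail_bound {s : ℝ} (hs : 1 < s) :
    (∑' n : ℕ, 1 / (n + 1 : ℝ) ^ s) ≤ s / (s - 1) := by
  have h0 : 0 ≤ ZetaAsymptotics.termTSum s :=
    tsum_nonneg fun n => ZetaAsymptotics.term_nonneg _ _
  have heq := ZetaAsymptotics.term_tsum_of_lt hs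
  have hs0 : 0 < s := by linarith
  have hs1 : 0 < s - 1 := by linarith
  rw [heq] at h0
  rw [div_eq_mul_one_div, mul_comm]
  have : 1 / s * (∑' n : ℕ, 1 / (n + 1 : ℝ) ^ s) ≤ 1 / (s - 1) := by linarith
  calc (∑' n : ℕ, 1 / (n + 1 : ℝ) ^ s)
      = s * (1 / s * (∑' n : ℕ, 1 / (n + 1 : ℝ) ^ s)) := by
        field_simp
    _ ≤ s * (1 / (s - 1)) := by
        exact mul_le_mul_of_nonneg_left this hs0.le
    _ = 1 / (s - 1) * s := by ring

theorem tail_sum_bound :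
    ∃ K > (0 : ℝ), ∀ x : ℝ, 10 ≤ x →
      (∑' n : ℕ, (if (n : ℝ) ≤ 2 / 3 * x ∨ 4 / 3 * x ≤ (n : ℝ) then
          Real.log n / ((n : ℝ) ^ (1 + 1 / Real.log x) * |Real.log (x / n)|) else 0))
        ≤ K * (Real.log x) ^ 2 := by
  refine ⟨24, by norm_num, fun x hx => ?_⟩
  set L : ℝ := Real.log x with hLdef
  have hx0 : (0 : ℝ) < x := by linarith
  have hL : 1 ≤ L := by
    rw [hLdef, Real.le_log_iff_exp_le hx0]
    have := Real.exp_one_lt_d9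
    linarith
  have hL0 : 0 < L := by linarith
  have hlog43 : (1 : ℝ) / 4 ≤ Real.log (4 / 3) := by
    have h := Real.log_le_sub_one_of_pos (show (0:ℝ) < 3/4 by norm_num)
    rw [show (4:ℝ)/3 = (3/4)⁻¹ by norm_num, Real.log_inv]
    linarith
  have hlog43pos : (0 : ℝ) < Real.log (4 / 3) := by linarith
  set c : ℝ := 1 + 1 / L with hcdef
  set s : ℝ := 1 + 1 / (2 * L) with hsdef
  have hs1 : 1 < s := by
    have : 0 < 1 / (2 * L) := by positivity
    rw [hsdef]; linarith
  set C : ℝ := 2 * L / Real.log (4 / 3) with hCdef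
  have hC0 : 0 ≤ C := by positivity
  set f : ℕ → ℝ := fun n => (if (n : ℝ) ≤ 2 / 3 * x ∨ 4 / 3 * x ≤ (n : ℝ) then
          Real.log n / ((n : ℝ) ^ c * |Real.log (x / n)|) else 0) with hfdef
  set g : ℕ → ℝ := fun n => C * (n : ℝ) ^ (-s) with hgdef
  -- nonnegativity of f
  have hf_nonneg : ∀ n, 0 ≤ f n := by
    intro n
    rw [hfdef]
    dsimp only
    split
    · apply div_nonneg
      · rcases Nat.eq_zero_or_pos n with h | h
        · simp [h]
        · exact Real.log_nonneg (by exact_mod_cast h)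
      · positivity
    · exact le_refl 0
  -- pointwise bound
  have hfg : ∀ n, f n ≤ g n := by
    intro n
    rw [hfdef, hgdef]
    dsimp only
    split
    case isFalse => positivity
    case isTrue hcond =>
      rcases Nat.eq_zero_or_pos n with h0 | h0
      · simp [h0]; positivity
      have hn1 : (1 : ℝ) ≤ (n : ℝ) := by exact_mod_cast h0
      have hn0 : (0 : ℝ) < (n : ℝ) := by linarith
      -- |log (x/n)| ≥ log (4/3)
      have habs : Real.log (4 / 3) ≤ |Real.log (x / n)| := by
        rcases hcond with h | h
        · have hxn : (3:ℝ)/2 ≤ x / n := by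
            rw [le_div_iff₀ hn0]; linarith
          have : Real.log (4/3) ≤ Real.log (x / n) := by
            apply Real.log_le_log (by norm_num)
            linarith
          exact this.trans (le_abs_self _)
        · have hxn : x / n ≤ 3/4 := by
            rw [div_le_iff₀ hn0]; linarith
          have hxn0 : 0 < x / n := by positivity
          have : Real.log (x / n) ≤ Real.log (3/4) := Real.log_le_log hxn0 hxn
          have h34 : Real.log ((3:ℝ)/4) = - Real.log (4/3) := by
            rw [show (3:ℝ)/4 = (4/3)⁻¹ by norm_num, Real.log_inv]
          have h5 : Real.log (4/3) ≤ - Real.log (x / n) := by rw [h34] at this; linarith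
          exact h5.trans (neg_le_abs _)
      -- log n ≤ 2L * n^(1/(2L))
      have hlogn : Real.log n ≤ 2 * L * (n : ℝ) ^ ((1:ℝ) / (2 * L)) := by
        have h1 : Real.log ((n : ℝ) ^ ((1:ℝ) / (2 * L))) = (1 / (2 * L)) * Real.log n :=
          Real.log_rpow hn0 _
        have h2 : Real.log ((n : ℝ) ^ ((1:ℝ) / (2 * L))) ≤ (n : ℝ) ^ ((1:ℝ) / (2 * L)) :=
          Real.log_le_self (by positivity)
        rw [h1] at h2
        have h3 : 2 * L * ((1 / (2 * L)) * Real.log n) ≤ 2 * L * ((n : ℝ) ^ ((1:ℝ) / (2 * L))) :=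
          mul_le_mul_of_nonneg_left h2 (by positivity)
        calc Real.log n = 2 * L * ((1 / (2 * L)) * Real.log n) := by field_simp
          _ ≤ _ := h3
      have hnc : (0:ℝ) < (n:ℝ) ^ c := by positivity
      calc Real.log n / ((n : ℝ) ^ c * |Real.log (x / n)|)
          ≤ (2 * L * (n : ℝ) ^ ((1:ℝ) / (2 * L))) / ((n : ℝ) ^ c * Real.log (4/3)) := by
            apply div_le_div₀
            · positivity
            · calc Real.log n ≤ 2 * L * (n : ℝ) ^ ((1:ℝ) / (2 * L)) := hlogn
                _ = _ := rfl
            · positivity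
            · exact mul_le_mul_of_nonneg_left habs hnc.le
        _ = C * (n : ℝ) ^ (-s) := by
            rw [hCdef, hsdef]
            rw [show -(1 + 1 / (2*L)) = (1:ℝ) / (2 * L) - c by rw [hcdef]; field_simp; ring]
            rw [Real.rpow_sub hn0]
            field_simp
  -- summability of g
  have hg_sum : Summable g := by
    rw [hgdef]
    apply Summable.mul_left
    rw [Real.summable_nat_rpow]
    linarith
  have hf_sum : Summable f := Summable.of_nonneg_of_le hf_nonneg hfg hg_sum
  -- sum of g
  have hsum_rpow : Summable fun n : ℕ => (n : ℝ) ^ (-s) := by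
    rw [Real.summable_nat_rpow]; linarith
  have hT : (∑' n : ℕ, (n : ℝ) ^ (-s)) ≤ s / (s - 1) := by
    rw [Summable.tsum_eq_zero_add hsum_rpow]
    have h0 : ((0:ℕ) : ℝ) ^ (-s) = 0 := by
      rw [Nat.cast_zero, Real.zero_rpow (by intro h; simp at h; linarith)]
    rw [h0, zero_add]
    have : ∀ n : ℕ, ((n + 1 : ℕ) : ℝ) ^ (-s) = 1 / (n + 1 : ℝ) ^ s := by
      intro n
      rw [Real.rpow_neg (by positivity), one_div]
      push_cast
      ring_nf
    rw [tsum_congr this]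
    exact zeta_tail_bound hs1
  have hsbound : s / (s - 1) ≤ 3 * L := by
    have hs1' : s - 1 = 1 / (2 * L) := by rw [hsdef]; ring
    have h6 : s / (s - 1) = 2 * L + 1 := by
      rw [hs1', hsdef]; field_simp
    rw [h6]; linarith
  calc (∑' n : ℕ, f n) ≤ ∑' n : ℕ, g n := Summable.tsum_le_tsum hfg hf_sum hg_sum
    _ = C * (∑' n : ℕ, (n : ℝ) ^ (-s)) := by rw [hgdef]; exact tsum_mul_left
    _ ≤ C * (3 * L) := by
        apply mul_le_mul_of_nonneg_left (hT.trans hsbound) hC0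
    _ ≤ 24 * L ^ 2 := by
        rw [hCdef]
        rw [div_mul_eq_mul_div, div_le_iff₀ hlog43pos]
        nlinarith
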